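/- arXiv:1010.5651 — 5 statements merged into one kernel-verified Lean document; each statement's English description precedes it below -/
import Mathlib

section
/- Let p be an odd prime, q ≥ 1, and D = p^q + 1. For any integer d ≥ 3, the integer 2·∑_{i=0}^{D-1}(d-1)^i − 4 is not divisible by p. Consequently (D−1) does not divide 2·∑_{i=0}^{D-1}(d-1)^i − 4. -/
/-- Let `p` be an odd prime, `q ≥ 1`, `D = p^q + 1`. For any `d ≥ 3`,
`2·∑_{i<D}(d-1)^i − 4` is not divisible by `p`, hence not by `D−1`. -/
theorem stmt1 (p q d D : ℕ) (hp : p.Prime) (hodd : Odd p) (hq : 1 ≤ q)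
    (hD : D = p ^ q + 1) (hd : 3 ≤ d) :
    ¬ p ∣ (2 * ∑ i ∈ Finset.range D, (d - 1) ^ i - 4) ∧
    ¬ (D - 1) ∣ (2 * ∑ i ∈ Finset.range D, (d - 1) ^ i - 4) := by
  haveI : Fact p.Prime := ⟨hp⟩
  have hp2 : p ≠ 2 := by
    have := Nat.odd_iff.mp hodd
    omega
  have hp3 : 3 ≤ p := by
    have := hp.two_le
    omega
  have hpq : p ≤ p ^ q := Nat.le_self_pow (by omega) p
  have hD4 : 4 ≤ D := by omega
  have hS : D ≤ ∑ i ∈ Finset.range D, (d - 1) ^ i := by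
    calc D = ∑ i ∈ Finset.range D, 1 := by simp
    _ ≤ _ := Finset.sum_le_sum (fun i _ => Nat.one_le_pow _ _ (by omega))
  have h4 : 4 ≤ 2 * ∑ i ∈ Finset.range D, (d - 1) ^ i := by omega
  have two_ne : (2 : ZMod p) ≠ 0 := by
    have : ((2 : ℕ) : ZMod p) ≠ 0 := by
      rw [Ne, ZMod.natCast_eq_zero_iff]
      intro h
      have := Nat.le_of_dvd (by norm_num) h
      omega
    simpa using this
  have key : ¬ p ∣ (2 * ∑ i ∈ Finset.range D, (d - 1) ^ i - 4) := by
    rw [← ZMod.natCast_eq_zero_iff]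
    rw [Nat.cast_sub h4]
    push_cast
    set a : ZMod p := ((d - 1 : ℕ) : ZMod p) with ha
    by_cases h1 : a = 1
    · rw [h1]
      simp only [one_pow, Finset.sum_const, Finset.card_range, nsmul_eq_mul, mul_one]
      have : ((D : ℕ) : ZMod p) = 1 := by
        rw [hD]; push_cast
        simp [ZMod.natCast_self, zero_pow (by omega : q ≠ 0)]
      rw [this]
      intro h
      apply two_ne
      have : (2 : ZMod p) * 1 - 4 = -2 := by ring
      rw [this] at h
      have := neg_eq_zero.mp h
      exact this
    · have hgeom : ∑ i ∈ Finset.range D, a ^ i = (a ^ D - 1) / (a - 1) :=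
        geom_sum_eq h1 D
      have haD : a ^ D = a ^ 2 := by
        rw [hD, pow_succ, ZMod.pow_card_pow, sq]
      have hsum : ∑ i ∈ Finset.range D, a ^ i = a + 1 := by
        rw [hgeom, haD]
        have h2 : a ^ 2 - 1 = (a + 1) * (a - 1) := by ring
        rw [h2, mul_div_assoc, div_self (sub_ne_zero.mpr h1), mul_one]
      rw [hsum]
      intro h
      have : (2 : ZMod p) * (a - 1) = 0 := by
        have : (2 : ZMod p) * (a + 1) - 4 = 2 * (a - 1) := by ring
        rw [this] at h
        exact h
      rcases mul_eq_zero.mp this with h' | h'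
      · exact two_ne h'
      · exact h1 (sub_eq_zero.mp h')
  refine ⟨key, fun h => key ?_⟩
  have hD1 : D - 1 = p ^ q := by omega
  exact dvd_trans (dvd_pow_self p (by omega : q ≠ 0)) (hD1 ▸ h)
end

section
/- For all integers d ≥ 3 and D ≥ 5 with D ≡ 1 (mod 3), the integer 2·∑_{i=0}^{D-1}(d-1)^i − 4 is not divisible by 3. -/
/-- For all `d ≥ 3` and `D ≥ 5` with `D ≡ 1 (mod 3)`,
`2·∑_{i<D}(d-1)^i − 4` is not divisible by `3`. -/
theorem stmt2 (d D : ℕ) (hd : 3 ≤ d) (hD : 5 ≤ D) (hmod : D % 3 = 1) :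
    ¬ (3 : ℕ) ∣ (2 * ∑ i ∈ Finset.range D, (d - 1) ^ i - 4) := by
  intro h
  set S := ∑ i ∈ Finset.range D, (d - 1) ^ i with hSdef
  have hS5 : D ≤ S := by
    calc D = ∑ _i ∈ Finset.range D, 1 := by simp
    _ ≤ S := Finset.sum_le_sum (fun i _ => Nat.one_le_pow _ _ (by omega))
  have h4 : 4 ≤ 2 * S := by omega
  zify [h4] at h
  have hz : ((2 * (S : ℤ) - 4 : ℤ) : ZMod 3) = 0 :=
    (ZMod.intCast_zmod_eq_zero_iff_dvd _ 3).mpr h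
  push_cast at hz
  have hSz : ((S : ℕ) : ZMod 3) = ∑ i ∈ Finset.range D, ((d - 1 : ℕ) : ZMod 3) ^ i := by
    rw [hSdef]; push_cast; rfl
  set b : ZMod 3 := ((d - 1 : ℕ) : ZMod 3) with hb
  have hcases : b = 0 ∨ b = 1 ∨ b = 2 := by
    have : ∀ x : ZMod 3, x = 0 ∨ x = 1 ∨ x = 2 := by decide
    exact this b
  have hD1 : ((D : ℕ) : ZMod 3) = 1 := by
    rw [← ZMod.natCast_mod, hmod]; rfl
  rcases hcases with h0 | h1 | h2
  · rw [h0] at hSz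
    rw [geom_sum_eq (by decide : (0 : ZMod 3) ≠ 1)] at hSz
    rw [zero_pow (by omega : D ≠ 0)] at hSz
    norm_num at hSz
    rw [hSz] at hz
    revert hz; decide
  · rw [h1] at hSz
    simp only [one_pow, Finset.sum_const, Finset.card_range, nsmul_eq_mul, mul_one] at hSz
    rw [hD1] at hSz
    rw [hSz] at hz
    revert hz; decide
  · rw [h2] at hSz
    rw [geom_sum_eq (by decide : (2 : ZMod 3) ≠ 1)] at hSz
    have h2n : (2 : ZMod 3) = -1 := by decide
    rw [h2n] at hSz
    rcases Nat.even_or_odd D with he | ho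
    · rw [he.neg_one_pow] at hSz
      norm_num at hSz
      rw [hSz] at hz
      revert hz; decide
    · rw [ho.neg_one_pow] at hSz
      have hdiv : ((-1 : ZMod 3) - 1) / (-1 - 1) = 1 := by
        apply div_self; decide
      rw [hdiv] at hSz
      rw [hSz] at hz
      revert hz; decide
end

section
/- For Δ ≥ 2 and 1 ≤ ε ≤ Δ−1, the complete bipartite graph K_{Δ,Δ−ε} has maximum degree Δ, diameter 2, and order M^b(Δ,2) − ε = 2Δ − ε; moreover these are the only bipartite (Δ,2,−ε)-graphs for 1 ≤ ε ≤ Δ−1. -/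
open scoped Classical

open SimpleGraph Finset

lemma adj_of_color_ne {V : Type} (G : SimpleGraph V) (c : V → Bool)
    (hc : ∀ u v, G.Adj u v → c u ≠ c v) (hd : G.diam = 2) {u v : V} (h : c u ≠ c v) :
    G.Adj u v := by
  have hne : u ≠ v := fun e => h (e ▸ rfl)
  have htop : G.ediam ≠ ⊤ := G.ediam_ne_top_of_diam_ne_zero (by omega)
  have hreach : G.Reachable u v := by
    rw [← SimpleGraph.edist_ne_top_iff_reachable]
    intro he
    exact htop (le_antisymm le_top (he ▸ SimpleGraph.edist_le_ediam))
  have hle : G.dist u v ≤ 2 := hd ▸ SimpleGraph.dist_le_diam htop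
  have hpos : 0 < G.dist u v := hreach.pos_dist_of_ne hne
  obtain ⟨p, hp⟩ := hreach.exists_walk_length_eq_dist
  have hodd : Odd p.length := by
    refine ((SimpleGraph.Coloring.mk c fun {a b} hab => hc a b hab).odd_length_iff_not_congr
      p).mpr ?_
    show ¬ c u = true ↔ c v = true
    revert h; cases hcu : c u <;> cases hcv : c v <;> simp
  rw [hp, Nat.odd_iff] at hodd
  have : G.dist u v = 1 := by omega
  exact (SimpleGraph.dist_eq_one_iff_adj).mp this

lemma buildIso (Δ ε : ℕ) {V : Type} [Fintype V] (G : SimpleGraph V)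
    (c : V → Bool) (hadj : ∀ u v, G.Adj u v ↔ c u ≠ c v)
    (hT : Fintype.card {v // c v = true} = Δ)
    (hF : Fintype.card {v // c v = false} = Δ - ε) :
    Nonempty (G ≃g completeBipartiteGraph (Fin Δ) (Fin (Δ - ε))) := by
  classical
  let eT := Fintype.equivFinOfCardEq hT
  let eF : {v // ¬ c v = true} ≃ Fin (Δ - ε) :=
    (Equiv.subtypeEquivRight (fun v => by simp)).trans (Fintype.equivFinOfCardEq hF)
  let e : V ≃ Fin Δ ⊕ Fin (Δ - ε) :=
    ((Equiv.sumCompl (fun v => c v = true)).symm.trans (Equiv.sumCongr eT eF))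
  have heT : ∀ v (h : c v = true), e v = Sum.inl (eT ⟨v, h⟩) := by
    intro v h
    simp only [e, Equiv.trans_apply]
    rw [Equiv.sumCompl_symm_apply_of_pos (p := fun v => c v = true) (a := v) h]
    rfl
  have heF : ∀ v (h : c v = false), e v = Sum.inr (eF ⟨v, by simp [h]⟩) := by
    intro v h
    simp only [e, Equiv.trans_apply]
    rw [Equiv.sumCompl_symm_apply_of_neg (p := fun v => c v = true) (a := v) (by simp [h])]
    rfl
  refine ⟨⟨e, ?_⟩⟩
  intro u v
  show (completeBipartiteGraph _ _).Adj (e u) (e v) ↔ G.Adj u v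
  rw [hadj]
  cases hcu : c u with
  | true =>
    cases hcv : c v with
    | true => rw [heT u hcu, heT v hcv]; simp [completeBipartiteGraph]
    | false => rw [heT u hcu, heF v hcv]; simp [completeBipartiteGraph]
  | false =>
    cases hcv : c v with
    | true => rw [heF u hcu, heT v hcv]; simp [completeBipartiteGraph]
    | false => rw [heF u hcu, heF v hcv]; simp [completeBipartiteGraph]

/-- For `Δ ≥ 2` and `1 ≤ ε ≤ Δ−1`, the complete bipartite graph `K_{Δ,Δ−ε}`
has maximum degree `Δ`, diameter 2, and order `2Δ − ε`; moreover these are the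
only bipartite `(Δ,2,−ε)`-graphs. -/
theorem stmt6 (Δ ε : ℕ) (hΔ : 2 ≤ Δ) (hε1 : 1 ≤ ε) (hε2 : ε ≤ Δ - 1) :
    (completeBipartiteGraph (Fin Δ) (Fin (Δ - ε))).maxDegree = Δ ∧
    (completeBipartiteGraph (Fin Δ) (Fin (Δ - ε))).diam = 2 ∧
    Fintype.card (Fin Δ ⊕ Fin (Δ - ε)) = 2 * Δ - ε ∧
    (∀ (V : Type) [Fintype V] (G : SimpleGraph V) [DecidableRel G.Adj]
        (c : V → Bool), (∀ u v, G.Adj u v → c u ≠ c v) →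
      G.maxDegree = Δ → G.diam = 2 → Fintype.card V = 2 * Δ - ε →
      Nonempty (G ≃g completeBipartiteGraph (Fin Δ) (Fin (Δ - ε)))) := by
  classical
  set K := completeBipartiteGraph (Fin Δ) (Fin (Δ - ε)) with hK
  have hde : 1 ≤ Δ - ε := by omega
  have b0 : Fin (Δ - ε) := ⟨0, by omega⟩
  have hdegl : ∀ a : Fin Δ, K.degree (Sum.inl a) = Δ - ε := by
    intro a
    have e : K.neighborSet (Sum.inl a) ≃ Fin (Δ - ε) := by
      refine (Equiv.ofBijective (fun b : Fin (Δ - ε) =>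
        (⟨Sum.inr b, Or.inl ⟨rfl, rfl⟩⟩ : K.neighborSet (Sum.inl a))) ⟨?_, ?_⟩).symm
      · intro b b' h; simpa using congrArg Subtype.val h
      · rintro ⟨(w | w), hw⟩
        · simp [K, completeBipartiteGraph] at hw
        · exact ⟨w, rfl⟩
    calc K.degree (Sum.inl a) = Fintype.card (K.neighborSet (Sum.inl a)) :=
          (SimpleGraph.card_neighborSet_eq_degree _ _).symm
      _ = Fintype.card (Fin (Δ - ε)) := Fintype.card_congr e
      _ = Δ - ε := Fintype.card_fin _
  have hdegr : ∀ b : Fin (Δ - ε), K.degree (Sum.inr b) = Δ := by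
    intro b
    have e : K.neighborSet (Sum.inr b) ≃ Fin Δ := by
      refine (Equiv.ofBijective (fun a : Fin Δ =>
        (⟨Sum.inl a, Or.inr ⟨rfl, rfl⟩⟩ : K.neighborSet (Sum.inr b))) ⟨?_, ?_⟩).symm
      · intro a a' h; simpa using congrArg Subtype.val h
      · rintro ⟨(w | w), hw⟩
        · exact ⟨w, rfl⟩
        · simp [K, completeBipartiteGraph] at hw
    calc K.degree (Sum.inr b) = Fintype.card (K.neighborSet (Sum.inr b)) :=
          (SimpleGraph.card_neighborSet_eq_degree _ _).symm
      _ = Fintype.card (Fin Δ) := Fintype.card_congr e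
      _ = Δ := Fintype.card_fin _
  have hmaxK : K.maxDegree = Δ := by
    apply le_antisymm
    · apply SimpleGraph.maxDegree_le_of_forall_degree_le
      rintro (a | b)
      · rw [hdegl]; omega
      · rw [hdegr]
    · calc Δ = K.degree (Sum.inr b0) := (hdegr b0).symm
        _ ≤ K.maxDegree := SimpleGraph.degree_le_maxDegree K _
  have hediam : K.ediam ≤ 2 := by
    apply SimpleGraph.ediam_le_of_edist_le
    rintro (a | b) (a' | b')
    · refine le_trans (SimpleGraph.edist_le
        (SimpleGraph.Walk.cons (v := Sum.inr b0) (Or.inl ⟨rfl, rfl⟩)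
          (SimpleGraph.Walk.cons (Or.inr ⟨rfl, rfl⟩) SimpleGraph.Walk.nil))) ?_
      simp
      exact le_rfl
    · rw [SimpleGraph.edist_eq_one_iff_adj.mpr (Or.inl ⟨rfl, rfl⟩)]; norm_num
    · rw [SimpleGraph.edist_eq_one_iff_adj.mpr (Or.inr ⟨rfl, rfl⟩)]; norm_num
    · refine le_trans (SimpleGraph.edist_le
        (SimpleGraph.Walk.cons (v := Sum.inl ⟨0, by omega⟩) (Or.inr ⟨rfl, rfl⟩)
          (SimpleGraph.Walk.cons (Or.inl ⟨rfl, rfl⟩) SimpleGraph.Walk.nil))) ?_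
      simp
      exact le_rfl
  have hetop : K.ediam ≠ ⊤ := fun h => by rw [h] at hediam; exact absurd hediam (by simp)
  have hdiamK : K.diam = 2 := by
    have hle2 : K.diam ≤ 2 := by
      have := ENat.toNat_le_toNat hediam (by simp)
      simpa [SimpleGraph.diam] using this
    have hdist : 2 ≤ K.dist (Sum.inl ⟨0, by omega⟩) (Sum.inl ⟨1, by omega⟩) := by
      have hne : (Sum.inl ⟨0, by omega⟩ : Fin Δ ⊕ Fin (Δ - ε)) ≠ Sum.inl ⟨1, by omega⟩ := by
        simp [Fin.ext_iff]
      have hnadj : ¬ K.Adj (Sum.inl ⟨0, by omega⟩) (Sum.inl ⟨1, by omega⟩) := by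
        simp [K, completeBipartiteGraph]
      have hreach : K.Reachable (Sum.inl ⟨0, by omega⟩) (Sum.inl ⟨1, by omega⟩) := by
        rw [← SimpleGraph.edist_ne_top_iff_reachable]
        intro h
        exact hetop (le_antisymm le_top (h ▸ SimpleGraph.edist_le_ediam))
      have h0 : K.dist (Sum.inl ⟨0, by omega⟩) (Sum.inl ⟨1, by omega⟩) ≠ 0 :=
        SimpleGraph.dist_ne_zero_iff_ne_and_reachable.mpr ⟨hne, hreach⟩
      have h1 : K.dist (Sum.inl ⟨0, by omega⟩) (Sum.inl ⟨1, by omega⟩) ≠ 1 :=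
        fun h => hnadj (SimpleGraph.dist_eq_one_iff_adj.mp h)
      omega
    have := SimpleGraph.dist_le_diam hetop
      (u := (Sum.inl ⟨0, by omega⟩ : Fin Δ ⊕ Fin (Δ - ε))) (v := Sum.inl ⟨1, by omega⟩)
    omega
  refine ⟨hmaxK, hdiamK, by simp [Fintype.card_sum]; omega, ?_⟩
  intro V _ G _ c hc hmax hdiam hcard
  have hadj : ∀ u v, G.Adj u v ↔ c u ≠ c v :=
    fun u v => ⟨hc u v, fun h => adj_of_color_ne G c hc hdiam h⟩
  have hcV : 0 < Fintype.card V := by rw [hcard]; omega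
  have : Nonempty V := Fintype.card_pos_iff.mp hcV
  -- both colors occur
  have hex : ∃ u v : V, c u ≠ c v := by
    obtain ⟨u0, v0, hd0⟩ := SimpleGraph.exists_dist_eq_diam (G := G)
    rw [hdiam] at hd0
    obtain ⟨p, hp⟩ := (SimpleGraph.dist_ne_zero_iff_ne_and_reachable.mp
      (show G.dist u0 v0 ≠ 0 by omega)).2.exists_walk_length_eq_dist
    rw [hd0] at hp
    cases p with
    | nil => simp at hp
    | cons h q => exact ⟨_, _, hc _ _ h⟩
  set nt := (Finset.univ.filter fun v => c v = true).card with hnt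
  set nf := (Finset.univ.filter fun v => c v = false).card with hnf
  have hsum : nt + nf = 2 * Δ - ε := by
    rw [hnt, hnf, ← hcard, ← Finset.card_univ,
      show (Finset.univ.filter fun v => c v = false) =
        (Finset.univ.filter fun v => ¬ c v = true) from
        Finset.filter_congr (fun v _ => by simp)]
    exact Finset.card_filter_add_card_filter_not (p := fun v => c v = true)
  have hdeg : ∀ v : V, G.degree v = if c v = true then nf else nt := by
    intro v
    rw [SimpleGraph.degree, SimpleGraph.neighborFinset_eq_filter]
    by_cases h : c v = true
    · rw [if_pos h, hnf]
      congr 1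
      apply Finset.filter_congr
      intro u _
      rw [hadj, h]
      cases hu : c u <;> simp
    · rw [if_neg h, hnt]
      congr 1
      apply Finset.filter_congr
      intro u _
      rw [hadj]
      rw [Bool.not_eq_true] at h
      rw [h]
      cases hu : c u <;> simp
  obtain ⟨u1, v1, huv1⟩ := hex
  obtain ⟨ut, huf⟩ : (∃ w : V, c w = true) ∧ (∃ w : V, c w = false) := by
    cases h1 : c u1 <;> cases h2 : c v1 <;> simp [h1, h2] at huv1 ⊢
    · exact ⟨⟨v1, h2⟩, ⟨u1, h1⟩⟩
    · exact ⟨⟨u1, h1⟩, ⟨v1, h2⟩⟩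
  obtain ⟨wt, hwt⟩ := ut
  obtain ⟨wf, hwf⟩ := huf
  have hnfle : nf ≤ Δ := by
    have := SimpleGraph.degree_le_maxDegree G wt
    rw [hdeg wt, if_pos hwt, hmax] at this; exact this
  have hntle : nt ≤ Δ := by
    have := SimpleGraph.degree_le_maxDegree G wf
    rw [hdeg wf, if_neg (by rw [hwf]; simp), hmax] at this; exact this
  have hone : Δ = nf ∨ Δ = nt := by
    obtain ⟨w, hw⟩ := SimpleGraph.exists_maximal_degree_vertex G
    rw [hmax, hdeg w] at hw
    by_cases h : c w = true
    · left; rwa [if_pos h] at hw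
    · right; rwa [if_neg h] at hw
  have hcardT : Fintype.card {v // c v = true} = nt := by
    rw [Fintype.card_subtype]
  have hcardF : Fintype.card {v // c v = false} = nf := by
    rw [Fintype.card_subtype]
  rcases hone with h | h
  · -- nf = Δ, nt = Δ - ε : use coloring !c
    have hnt' : nt = Δ - ε := by omega
    refine buildIso Δ ε G (fun v => !c v) (fun u v => ?_) ?_ ?_
    · rw [hadj]; cases hu : c u <;> cases hv : c v <;> simp [hu, hv]
    · rw [show Δ = nf from h, ← hcardF]
      exact Fintype.card_congr (Equiv.subtypeEquivRight (fun v => by simp))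
    · rw [← hnt', ← hcardT]
      exact Fintype.card_congr (Equiv.subtypeEquivRight (fun v => by simp))
  · -- nt = Δ, nf = Δ - ε
    have hnf' : nf = Δ - ε := by omega
    exact buildIso Δ ε G c hadj (by omega) (by omega)
end

section
/- For d ≥ 3 and odd D ≥ 5, the integer N = (2·∑_{i=0}^{D-1}(d-1)^i − 4)/(D−1), when it is an integer, is odd. -/
/-- For `d ≥ 3` and odd `D ≥ 5`: if `D−1` divides `2∑_{i<D}(d-1)^i − 4`,
then the quotient is odd. -/
theorem stmt13 (d D : ℕ) (hd : 3 ≤ d) (hD : 5 ≤ D) (hodd : Odd D)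
    (hdvd : (D - 1) ∣ (2 * ∑ i ∈ Finset.range D, (d - 1) ^ i - 4)) :
    Odd ((2 * ∑ i ∈ Finset.range D, (d - 1) ^ i - 4) / (D - 1)) := by
  set S := ∑ i ∈ Finset.range D, (d - 1) ^ i with hS
  -- S is odd
  have hSodd : Odd S := by
    rcases Nat.even_or_odd (d - 1) with he | ho
    · -- d-1 even: S = 1 + even stuff
      obtain ⟨D', rfl⟩ : ∃ D', D = D' + 1 := ⟨D - 1, by omega⟩
      rw [hS, Finset.sum_range_succ']
      have : Even (∑ i ∈ Finset.range D', (d - 1) ^ (i + 1)) := by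
        apply Finset.even_sum
        intro i _
        exact he.pow_of_ne_zero (by omega)
      simpa using this.add_one
    · -- d-1 odd: sum of D odd terms, D odd
      rw [Nat.odd_iff, hS, Finset.sum_nat_mod]
      have : ∀ i ∈ Finset.range D, (d - 1) ^ i % 2 = 1 % 2 := by
        intro i _
        rw [Nat.odd_iff.mp (ho.pow)]
      rw [Finset.sum_congr rfl this]
      simp [Finset.sum_const, Nat.odd_iff.mp hodd]
  -- S ≥ 3
  have hS3 : 3 ≤ S := by
    have hsub : ∑ i ∈ Finset.range 2, (d - 1) ^ i ≤ S := by
      apply Finset.sum_le_sum_of_subset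
      exact Finset.range_subset_range.mpr (by omega)
    have : ∑ i ∈ Finset.range 2, (d - 1) ^ i = 1 + (d - 1) := by
      simp [Finset.sum_range_succ]
    omega
  have hkey : 2 * S - 4 = 2 * (S - 2) := by omega
  obtain ⟨q, hq⟩ := hdvd
  rw [hq, Nat.mul_div_cancel_left q (by omega : 0 < D - 1)]
  rcases Nat.even_or_odd q with ⟨k, rfl⟩ | h
  · exfalso
    have h2 : 2 * (S - 2) = 2 * ((D - 1) * k) := by
      rw [← hkey, hq]; ring
    have h3 : S - 2 = (D - 1) * k := by omega
    have hDe : 2 ∣ (D - 1) := by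
      rw [Nat.odd_iff] at hodd; omega
    have : 2 ∣ S - 2 := h3 ▸ hDe.mul_right k
    rw [Nat.odd_iff] at hSodd
    omega
  · exact h
end

section
/- There is no d-regular bipartite graph with d ≥ 3, diameter 5, girth 8, and order M^b(d,5) − 4 = 2(1 + (d-1) + (d-1)² + (d-1)³ + (d-1)⁴) − 4 in which every vertex lies on exactly two 8-cycles, because 4 does not divide M^b(d,5) − 4 appropriately: specifically, the count (M^b(d,5) − 4)/4 of 8-cycles fails to be an even integer. -/
/-- The set of edge sets of cycles of length `L` through the vertex `v`. -/
def cyclesThrough {V : Type*} [DecidableEq V] (G : SimpleGraph V) (L : ℕ)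
    (v : V) : Set (Finset (Sym2 V)) :=
  {E | ∃ w : G.Walk v v, w.IsCycle ∧ w.length = L ∧ w.edges.toFinset = E}

lemma cycle_support_card {V : Type*} [DecidableEq V] {G : SimpleGraph V} {v : V}
    (w : G.Walk v v) (hc : w.IsCycle) (hl : w.length = 8) :
    w.support.toFinset.card = 8 := by
  cases w with
  | nil => simp at hl
  | cons h p =>
    have hnd : p.support.Nodup := by
      have := hc.support_nodup
      simpa using this
    have hlp : p.support.length = 8 := by
      have := SimpleGraph.Walk.length_support p
      simp at hl
      omega
    have hv : v ∈ p.support := SimpleGraph.Walk.end_mem_support p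
    rw [SimpleGraph.Walk.support_cons, List.toFinset_cons,
      Finset.insert_eq_self.mpr (List.mem_toFinset.mpr hv),
      List.toFinset_card_of_nodup hnd, hlp]

lemma mem_cyclesThrough_iff {V : Type*} [DecidableEq V] {G : SimpleGraph V} {v0 u : V}
    (w : G.Walk v0 v0) (hc : w.IsCycle) (hl : w.length = 8) :
    w.edges.toFinset ∈ cyclesThrough G 8 u ↔ u ∈ w.support := by
  simp only [cyclesThrough, Set.mem_setOf_eq]
  constructor
  · rintro ⟨w', hc', hl', he'⟩
    cases w' with
    | nil => simp at hl'
    | @cons _ b _ h p =>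
      have : s(u, b) ∈ (SimpleGraph.Walk.cons h p).edges := by
        rw [SimpleGraph.Walk.edges_cons]; exact List.mem_cons_self
      have hmem : s(u, b) ∈ w.edges := by
        have := List.mem_toFinset.mpr this
        rw [he'] at this
        exact List.mem_toFinset.mp this
      exact w.fst_mem_support_of_mem_edges hmem
  · intro hu
    refine ⟨w.rotate u hu, hc.rotate hu, ?_, ?_⟩
    · have := (w.rotate_edges u hu).perm.length_eq
      rw [SimpleGraph.Walk.length_edges, SimpleGraph.Walk.length_edges] at this
      omega
    · have hp := (w.rotate_edges u hu).perm
      exact Finset.ext fun e => by simp [List.mem_toFinset, hp.mem_iff]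

/-- There is no `d`-regular bipartite graph with `d ≥ 3`, diameter 5, girth 8,
order `M^b(d,5) − 4` in which every vertex lies on exactly two 8-cycles. -/
theorem stmt14 (d : ℕ) (hd : 3 ≤ d) :
    ∀ (V : Type*) [Fintype V] [DecidableEq V] (G : SimpleGraph V)
      [DecidableRel G.Adj] (c : V → Bool),
      (∀ u v, G.Adj u v → c u ≠ c v) →
      G.IsRegularOfDegree d → G.diam = 5 → G.girth = (8 : ℕ) →
      Fintype.card V = 2 * ∑ i ∈ Finset.range 5, (d - 1) ^ i - 4 →
      (∀ v : V, (cyclesThrough G 8 v).ncard = 2) → False := by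
  intro V _ _ G _ c hbip hreg hdiam hgirth hcard hcyc
  classical
  set T : V → Finset (Finset (Sym2 V)) := fun v => (cyclesThrough G 8 v).toFinset with hTdef
  have hT2 : ∀ v, (T v).card = 2 := by
    intro v
    rw [hTdef]
    rw [← Set.ncard_eq_toFinset_card']
    exact hcyc v
  set S : Finset (Finset (Sym2 V)) := Finset.univ.biUnion T with hS
  have hTsub : ∀ v, T v ⊆ S := fun v => Finset.subset_biUnion_of_mem T (Finset.mem_univ v)
  have key : ∀ E ∈ S, (Finset.univ.filter (fun v => E ∈ T v)).card = 8 := by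
    intro E hE
    obtain ⟨v0, _, hv0⟩ := Finset.mem_biUnion.mp hE
    rw [hTdef] at hv0
    simp only [Set.mem_toFinset] at hv0
    obtain ⟨w, hcyc', hl, he⟩ := hv0
    have heq : Finset.univ.filter (fun v => E ∈ T v) = w.support.toFinset := by
      ext u
      simp only [Finset.mem_filter, Finset.mem_univ, true_and, hTdef, Set.mem_toFinset,
        List.mem_toFinset]
      subst he
      exact mem_cyclesThrough_iff w hcyc' hl
    rw [heq]
    exact cycle_support_card w hcyc' hl
  have hmain : 2 * Fintype.card V = 8 * S.card := by
    calc 2 * Fintype.card V = ∑ v : V, (T v).card := by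
          simp [hT2, Finset.sum_const, mul_comm]
      _ = ∑ v : V, (S.filter (· ∈ T v)).card := by
          refine Finset.sum_congr rfl fun v _ => ?_
          rw [Finset.filter_mem_eq_inter, Finset.inter_eq_right.mpr (hTsub v)]
      _ = ∑ v : V, ∑ E ∈ S, (if E ∈ T v then 1 else 0) := by
          refine Finset.sum_congr rfl fun v _ => ?_
          rw [Finset.card_filter]
      _ = ∑ E ∈ S, ∑ v : V, (if E ∈ T v then 1 else 0) := Finset.sum_comm
      _ = ∑ E ∈ S, (Finset.univ.filter (fun v => E ∈ T v)).card := by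
          refine Finset.sum_congr rfl fun E _ => ?_
          rw [Finset.card_filter]
      _ = ∑ E ∈ S, 8 := Finset.sum_congr rfl key
      _ = 8 * S.card := by rw [Finset.sum_const, smul_eq_mul, mul_comm]
  -- arithmetic contradiction
  set k := d - 1 with hk
  have hk2 : 2 ≤ k := by omega
  have hs : ∑ i ∈ Finset.range 5, k ^ i = 1 + (k + k ^ 2) + (k ^ 3 + k ^ 4) := by
    simp [Finset.sum_range_succ]
    ring
  have he1 : Even (k + k ^ 2) := by
    have := Nat.even_mul_succ_self k
    have h' : k * (k + 1) = k + k ^ 2 := by ring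
    rwa [h'] at this
  have he2 : Even (k ^ 3 + k ^ 4) := by
    have h' : k ^ 2 * (k + k ^ 2) = k ^ 3 + k ^ 4 := by ring
    rw [← h']
    exact he1.mul_left _
  obtain ⟨a, ha⟩ := he1
  obtain ⟨b, hb⟩ := he2
  have hge : 2 ≤ k + k ^ 2 := le_trans hk2 (Nat.le_add_right _ _)
  rw [hcard, hs, ha, hb] at hmain
  omega
end
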